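/- Let R be a topological ring with identity and let I₁, …, Iₙ be two-sided ideals of R that are pairwise topologically co-maximal. Then the canonical ring homomorphism φ : R → ∏ₖ₌₁ⁿ R/Iₖ defined by φ(r) = (r + Iₖ)ₖ has dense image in ∏ₖ₌₁ⁿ R/Iₖ, where each R/Iₖ carries the quotient topology and the product carries the product topology. -/

import Mathlib

open Pointwise

/-- The quotient topology on the quotient of a topological ring by a ring congruence. -/
instance ringConQuotientTopology {R : Type*} [Ring R] [TopologicalSpace R] (c : RingCon R) :
    TopologicalSpace c.Quotient :=
  TopologicalSpace.coinduced c.mk' inferInstance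

/-- Approximate idempotents: given `k` and a finite set `S` of indices not containing `k`,
there is `v` lying in all `I l` for `l ∈ S` with `v - 1 ∈ I k + W`. -/
lemma crat_aux {R : Type*} [Ring R] [TopologicalSpace R] [IsTopologicalRing R]
    {n : ℕ} (I : Fin n → TwoSidedIdeal R)
    (h : ∀ k l : Fin n, k ≠ l → closure ((I k : Set R) + (I l : Set R)) = Set.univ)
    (k : Fin n) (S : Finset (Fin n)) :
    k ∉ S → ∀ W ∈ nhds (0 : R), ∃ v : R, (∀ l ∈ S, v ∈ I l) ∧
      ∃ a ∈ I k, ∃ w ∈ W, v - 1 = a + w := by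
  induction S using Finset.induction_on with
  | empty =>
    intro _ W hW
    exact ⟨1, by simp, 0, (I k).zero_mem, 0, mem_of_mem_nhds hW, by simp⟩
  | @insert l S' hlS' ih =>
    intro hk W hW
    have hkl : k ≠ l := fun e => hk (e ▸ Finset.mem_insert_self l S')
    have hkS' : k ∉ S' := fun e => hk (Finset.mem_insert_of_mem e)
    obtain ⟨W₁, hW₁, hW₁W⟩ := exists_nhds_zero_half hW
    obtain ⟨v, hv, a, ha, w, hw, hvw⟩ := ih hkS' W₁ hW₁
    have hcont : Filter.Tendsto (fun x => v * x) (nhds 0) (nhds (0 : R)) := by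
      simpa using (show Continuous fun x : R => v * x from continuous_const.mul continuous_id).tendsto (0 : R)
    have hW₂ : (fun x => v * x) ⁻¹' W₁ ∈ nhds (0 : R) := hcont hW₁
    have h1 : (1 : R) ∈ closure ((I k : Set R) + (I l : Set R)) := by
      rw [h k l hkl]; trivial
    have ht : (fun x => x - 1) ⁻¹' ((fun x => v * x) ⁻¹' W₁) ∈ nhds (1 : R) := by
      apply ContinuousAt.preimage_mem_nhds (by fun_prop)
      simpa using hW₂
    obtain ⟨z, hz1, hz2⟩ := mem_closure_iff_nhds.mp h1 _ ht
    obtain ⟨a', ha', b', hb', hab⟩ := hz2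
    refine ⟨v * b', ?_, ?_⟩
    · intro l' hl'
      rcases Finset.mem_insert.mp hl' with rfl | hl'
      · exact (I l').mul_mem_left _ _ hb'
      · exact (I l').mul_mem_right _ _ (hv l' hl')
    · refine ⟨a - v * a', (I k).sub_mem ha ((I k).mul_mem_left _ _ ha'), w + v * (z - 1),
        hW₁W _ hw _ hz1, ?_⟩
      have hb'eq : b' = z - a' := by rw [← hab]; exact (add_sub_cancel_left a' b').symm
      rw [hb'eq, ← sub_eq_zero]
      have hkey : v * (z - a') - 1 - (a - v * a' + (w + v * (z - 1))) = v - 1 - (a + w) := by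
        noncomm_ring
      rw [hkey, hvw, sub_self]

/-- Finite Chinese remainder approximation theorem (density part): if `I 0, …, I (n-1)` are
pairwise topologically co-maximal two-sided ideals of a topological ring `R`, then the
canonical homomorphism `R → ∏ k, R/I k` has dense image (quotient topologies, product
topology). -/
theorem finite_crat_dense {R : Type*} [Ring R] [TopologicalSpace R] [IsTopologicalRing R]
    [T2Space R] {n : ℕ} (I : Fin n → TwoSidedIdeal R)
    (h : ∀ k l : Fin n, k ≠ l → closure ((I k : Set R) + (I l : Set R)) = Set.univ) :
    DenseRange (fun r (k : Fin n) => (I k).ringCon.mk' r) := by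
  intro x
  rw [mem_closure_iff]
  intro o ho hxo
  obtain ⟨F, u, hu, hsub⟩ := isOpen_pi_iff.mp ho x hxo
  have hsurj : ∀ k, ∃ a : R, (I k).ringCon.mk' a = x k :=
    fun k => Quot.inductionOn (x k) fun r => ⟨r, rfl⟩
  choose a ha using hsurj
  classical
  set V : ∀ k : Fin n, Set (I k).ringCon.Quotient :=
    fun k => if k ∈ F then u k else Set.univ with hV
  set S : ∀ k : Fin n, Set R := fun k => (I k).ringCon.mk' ⁻¹' V k with hS
  have hmkcont : ∀ k : Fin n, Continuous ((I k).ringCon.mk') := fun k => continuous_coinduced_rng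
  have hSopen : ∀ k, IsOpen (S k) := by
    intro k
    apply (hmkcont k).isOpen_preimage
    by_cases hk : k ∈ F
    · simpa [hV, hk] using (hu k hk).1
    · simp [hV, hk]
  have haS : ∀ k, a k ∈ S k := by
    intro k
    simp only [hS, Set.mem_preimage, ha]
    by_cases hk : k ∈ F
    · simpa [hV, hk] using (hu k hk).2
    · simp [hV, hk]
  have hWk : ∀ k, ∃ Wk ∈ nhds (0 : R), ∀ w ∈ Wk, a k + w ∈ S k := by
    intro k
    have hmem : S k ∈ nhds (a k) := (hSopen k).mem_nhds (haS k)
    have htend : Filter.Tendsto (fun w => a k + w) (nhds 0) (nhds (a k)) := by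
      simpa using (show Continuous fun w : R => a k + w from continuous_const.add continuous_id).tendsto (0 : R)
    exact ⟨_, htend hmem, fun w hw => hw⟩
  choose Wf hWf hWfP using hWk
  set W0 : Set R := ⋂ k, Wf k with hW0
  have hW0mem : W0 ∈ nhds (0 : R) := Filter.iInter_mem.mpr hWf
  have key : ∀ m : Fin n, ∃ rm : R, (∀ l : Fin n, l ≠ m → rm ∈ I l) ∧
      ∃ c ∈ I m, ∃ w, a m * w ∈ W0 ∧ rm - 1 = c + w := by
    intro m
    have htend : Filter.Tendsto (fun w => a m * w) (nhds 0) (nhds (0 : R)) := by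
      simpa using (show Continuous fun w : R => a m * w from continuous_const.mul continuous_id).tendsto (0 : R)
    have hW' : (fun w => a m * w) ⁻¹' W0 ∈ nhds (0 : R) := htend hW0mem
    obtain ⟨v, hv, c, hc, w, hw, hvw⟩ :=
      crat_aux I h m (Finset.univ.erase m) (Finset.notMem_erase m _) _ hW'
    exact ⟨v, fun l hl => hv l (Finset.mem_erase.mpr ⟨hl, Finset.mem_univ l⟩), c, hc, w, hw, hvw⟩
  choose r hrI c hc w hw hrw using key
  set ρ : R := ∑ k, a k * r k with hρ
  refine ⟨fun k => (I k).ringCon.mk' ρ, hsub ?_, ⟨ρ, rfl⟩⟩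
  intro m hm
  have heq : (I m).ringCon.mk' ρ = (I m).ringCon.mk' (a m + a m * w m) := by
    apply (RingCon.eq _).mpr
    apply ((I m).rel_iff _ _).mpr
    have hd : ρ - (a m + a m * w m) =
        (∑ k ∈ Finset.univ.erase m, a k * r k) + a m * c m := by
      rw [show ρ = a m * r m + ∑ k ∈ Finset.univ.erase m, a k * r k from
        (Finset.add_sum_erase _ _ (Finset.mem_univ m)).symm]
      have hrm : r m = 1 + (c m + w m) := by rw [← hrw m]; abel
      rw [hrm]; noncomm_ring
    rw [hd]
    refine (I m).add_mem ((I m).finsetSum_mem _ _ fun k hk => ?_)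
      ((I m).mul_mem_left _ _ (hc m))
    exact (I m).mul_mem_left _ _ (hrI k m (Finset.mem_erase.mp hk).1.symm)
  show (I m).ringCon.mk' ρ ∈ u m
  rw [heq]
  have hmemS : a m + a m * w m ∈ S m := by
    apply hWfP m
    exact Set.mem_iInter.mp (hw m) m
  have hmF : m ∈ F := hm
  simp only [hS, hV, Set.mem_preimage, if_pos hmF] at hmemS
  exact hmemS
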